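/- Let μ and ν be probability measures on a measurable space with μ ≪ ν, let ρ > 0 and δ ∈ (0, 1), and suppose that for every λ > 1, ∫⁻ (μ.rnDeriv ν)^λ dν ≤ exp(λ · (λ − 1) · ρ) (i.e. the Rényi divergence of every order λ ∈ (1, ∞) between μ and ν is at most λρ). Then for every measurable set S, μ(S) ≤ exp(ρ + 2·√(ρ · log(1/δ))) · ν(S) + δ. (Conversion from zero-concentrated differential privacy to approximate differential privacy: any ρ-zCDP algorithm is (ρ + 2√(ρ log(1/δ)), δ)-DP for every δ > 0.) -/

import Mathlib

set_option linter.unnecessarySimpa false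


open MeasureTheory Real

/-- Conversion from zero-concentrated to approximate differential privacy: if the Rényi
divergence of every order `l ∈ (1, ∞)` between `μ` and `ν` is at most `l · ρ`, then for
every `δ ∈ (0, 1)` and every measurable set `S`,
`μ S ≤ exp (ρ + 2√(ρ log(1/δ))) * ν S + δ`. -/
theorem zcdp_to_approx_dp {X : Type*} [MeasurableSpace X] (μ ν : Measure X)
    [IsProbabilityMeasure μ] [IsProbabilityMeasure ν] (hac : μ ≪ ν)
    (ρ δ : ℝ) (hρ : 0 < ρ) (hδ₀ : 0 < δ) (hδ₁ : δ < 1)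
    (h : ∀ l : ℝ, 1 < l →
      ∫⁻ x, (μ.rnDeriv ν x) ^ l ∂ν ≤ ENNReal.ofReal (Real.exp (l * (l - 1) * ρ))) :
    ∀ S : Set X, MeasurableSet S →
      μ S ≤ ENNReal.ofReal (Real.exp (ρ + 2 * Real.sqrt (ρ * Real.log (1 / δ)))) * ν S +
        ENNReal.ofReal δ := by
  intro S hS
  set f := μ.rnDeriv ν with hfdef
  have hfm : Measurable f := Measure.measurable_rnDeriv μ ν
  set L : ℝ := Real.log (1 / δ) with hLdef
  have hL : 0 < L := Real.log_pos ((one_lt_div hδ₀).2 hδ₁)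
  set s : ℝ := Real.sqrt (ρ * L) with hsdef
  have hs_pos : 0 < s := Real.sqrt_pos.2 (mul_pos hρ hL)
  have hsq : s ^ 2 = ρ * L := Real.sq_sqrt (mul_pos hρ hL).le
  set l : ℝ := 1 + s / ρ with hldef
  have hl : 1 < l := by
    rw [hldef]
    linarith [div_pos hs_pos hρ]
  set ε : ℝ := ρ + 2 * s with hεdef
  have key : (l - 1) * (ε - l * ρ) = L := by
    rw [hldef, hεdef]
    field_simp
    nlinarith [hsq]
  set c : ENNReal := ENNReal.ofReal (Real.exp ε) with hcdef
  have hc0 : c ≠ 0 := (ENNReal.ofReal_pos.2 (Real.exp_pos ε)).ne'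
  have hcT : c ≠ ⊤ := ENNReal.ofReal_ne_top
  set A : Set X := f ⁻¹' Set.Ioi c with hAdef
  have hA : MeasurableSet A := hfm measurableSet_Ioi
  -- pointwise bound on A
  have hpt : ∀ x ∈ A, f x ≤ f x ^ l * c ^ (1 - l) := by
    intro x hx
    have hcx : c < f x := hx
    by_cases hfx : f x = ⊤
    · rw [hfx]
      have h1 : (⊤ : ENNReal) ^ l = ⊤ := ENNReal.top_rpow_of_pos (by linarith)
      have h2 : c ^ (1 - l) ≠ 0 := by
        simp [ENNReal.rpow_eq_zero_iff, hc0, hcT]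
      rw [h1, ENNReal.top_mul h2]
    · have hfx0 : f x ≠ 0 := by
        intro h0
        rw [h0] at hcx
        exact (not_lt_of_ge (zero_le (a := c))) (by simpa using hcx)
      have heq : f x = f x ^ l * f x ^ (1 - l) := by
        rw [← ENNReal.rpow_add _ _ hfx0 hfx]
        norm_num
      calc f x = f x ^ l * f x ^ (1 - l) := heq
        _ ≤ f x ^ l * c ^ (1 - l) := by
            refine mul_le_mul_right ?_ _
            have h1l : (1 : ℝ) - l = -(l - 1) := by ring
            rw [h1l, ENNReal.rpow_neg, ENNReal.rpow_neg]
            exact ENNReal.inv_le_inv.mpr (ENNReal.rpow_le_rpow hcx.le (by linarith))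
  -- Markov bound: μ A ≤ δ
  have hμA : μ A ≤ ENNReal.ofReal δ := by
    have h1 : μ A = ∫⁻ x in A, f x ∂ν := (Measure.setLIntegral_rnDeriv hac A).symm
    have h2 : ∫⁻ x in A, f x ∂ν ≤ ∫⁻ x in A, f x ^ l * c ^ (1 - l) ∂ν :=
      setLIntegral_mono ((hfm.pow_const l).mul measurable_const) hpt
    have h3 : ∫⁻ x in A, f x ^ l * c ^ (1 - l) ∂ν
        = (∫⁻ x in A, f x ^ l ∂ν) * c ^ (1 - l) :=
      lintegral_mul_const _ (hfm.pow_const l)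
    have h4 : (∫⁻ x in A, f x ^ l ∂ν) ≤ ENNReal.ofReal (Real.exp (l * (l - 1) * ρ)) :=
      le_trans (setLIntegral_le_lintegral A _) (h l hl)
    have h5 : c ^ (1 - l) = ENNReal.ofReal (Real.exp (ε * (1 - l))) := by
      rw [hcdef, ENNReal.ofReal_rpow_of_pos (Real.exp_pos ε), ← Real.exp_mul]
    calc μ A = ∫⁻ x in A, f x ∂ν := h1
      _ ≤ (∫⁻ x in A, f x ^ l ∂ν) * c ^ (1 - l) := h2.trans_eq h3
      _ ≤ ENNReal.ofReal (Real.exp (l * (l - 1) * ρ)) *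
          ENNReal.ofReal (Real.exp (ε * (1 - l))) := by
        rw [h5]; exact mul_le_mul_left h4 _
      _ = ENNReal.ofReal (Real.exp (l * (l - 1) * ρ) * Real.exp (ε * (1 - l))) :=
        (ENNReal.ofReal_mul (Real.exp_pos _).le).symm
      _ = ENNReal.ofReal δ := by
        rw [← Real.exp_add]
        congr 1
        have harg : l * (l - 1) * ρ + ε * (1 - l) = -L := by
          rw [← key]; ring
        rw [harg, hLdef, one_div, Real.log_inv, neg_neg, Real.exp_log hδ₀]
  -- bound off A
  have hSA : μ (S \ A) ≤ c * ν S := by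
    have h1 : μ (S \ A) = ∫⁻ x in S \ A, f x ∂ν :=
      (Measure.setLIntegral_rnDeriv hac _).symm
    have h2 : ∫⁻ x in S \ A, f x ∂ν ≤ ∫⁻ _ in S \ A, c ∂ν := by
      refine setLIntegral_mono measurable_const fun x hx => ?_
      have : ¬ (c < f x) := hx.2
      exact not_lt.mp this
    rw [h1]
    refine h2.trans ?_
    rw [setLIntegral_const]
    exact mul_le_mul_right (measure_mono Set.diff_subset) _
  calc μ S = μ (S ∩ A) + μ (S \ A) := (measure_inter_add_diff S hA).symm
    _ ≤ μ A + c * ν S := add_le_add (measure_mono Set.inter_subset_right) hSA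
    _ ≤ ENNReal.ofReal δ + c * ν S := add_le_add_left hμA _
    _ = c * ν S + ENNReal.ofReal δ := add_comm _ _
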